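/- Let ℓmin, ℓmax be positive reals with ℓmin ≤ ℓmax, let ρ = ℓmax/ℓmin, γ̄ = ⌊ρ⌋ and γ̂ = ⌈ρ⌉ − 1. Let p₁ be a natural number and p₂ : ℕ → ℕ a function supported on {1, …, γ̄} (i.e., p₂ j = 0 for j = 0 and for j > γ̄), such that ∑_{j=1}^{γ̄} j · p₂ j ≤ γ̂ · p₁ and such that ℓmax · ∑_{j=1}^{γ̄} p₂ j + ℓmin · γ̂ · p₁ > 0. Then (ℓmin · ∑_{j=1}^{γ̄} j · p₂ j) / (ℓmax · ∑_{j=1}^{γ̄} p₂ j + ℓmin · γ̂ · p₁) ≤ γ̄ / (ρ + γ̄). -/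

import Mathlib

/-- Algebraic core of the adversarial-arrivals upper bound (Theorem 2 of the paper). -/
theorem relative_throughput_adversarial_upper_bound
    (ℓmin ℓmax : ℝ) (hℓmin : 0 < ℓmin) (hle : ℓmin ≤ ℓmax)
    (ρ : ℝ) (hρ : ρ = ℓmax / ℓmin)
    (γbar γhat : ℕ) (hγbar : γbar = ⌊ρ⌋₊) (hγhat : γhat = ⌈ρ⌉₊ - 1)
    (p₁ : ℕ) (p₂ : ℕ → ℕ)
    (hsupp : ∀ j : ℕ, (j = 0 ∨ γbar < j) → p₂ j = 0)
    (hsum : (∑ j ∈ Finset.Icc 1 γbar, j * p₂ j) ≤ γhat * p₁)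
    (hpos : 0 < ℓmax * (∑ j ∈ Finset.Icc 1 γbar, (p₂ j : ℝ))
              + ℓmin * (γhat : ℝ) * (p₁ : ℝ)) :
    (ℓmin * ∑ j ∈ Finset.Icc 1 γbar, (j : ℝ) * (p₂ j : ℝ)) /
      (ℓmax * (∑ j ∈ Finset.Icc 1 γbar, (p₂ j : ℝ))
        + ℓmin * (γhat : ℝ) * (p₁ : ℝ))
      ≤ (γbar : ℝ) / (ρ + (γbar : ℝ)) := by
  have hρ1 : (1:ℝ) ≤ ρ := by
    rw [hρ, le_div_iff₀ hℓmin]; linarith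
  set S : ℝ := ∑ j ∈ Finset.Icc 1 γbar, (p₂ j : ℝ) with hSdef
  set T : ℝ := ∑ j ∈ Finset.Icc 1 γbar, (j : ℝ) * (p₂ j : ℝ) with hTdef
  have hS : 0 ≤ S := Finset.sum_nonneg fun j _ => by positivity
  have hT1 : T ≤ (γbar : ℝ) * S := by
    rw [hTdef, hSdef, Finset.mul_sum]
    apply Finset.sum_le_sum
    intro j hj
    have h1 : (j:ℝ) ≤ (γbar:ℝ) := by exact_mod_cast (Finset.mem_Icc.mp hj).2
    have h2 : (0:ℝ) ≤ (p₂ j : ℝ) := by positivity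
    nlinarith
  have hT2 : T ≤ (γhat : ℝ) * (p₁ : ℝ) := by
    have : T = ((∑ j ∈ Finset.Icc 1 γbar, j * p₂ j : ℕ) : ℝ) := by
      rw [hTdef]; push_cast; ring
    rw [this]
    exact_mod_cast hsum
  have hml : ℓmin * ρ = ℓmax := by rw [hρ]; field_simp
  rw [div_le_div_iff₀ hpos (by positivity)]
  have hγb : (0:ℝ) ≤ (γbar:ℝ) := Nat.cast_nonneg _
  have h1 : ℓmax * T ≤ ℓmax * ((γbar:ℝ) * S) :=
    mul_le_mul_of_nonneg_left hT1 (by linarith)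
  have h2 : (γbar:ℝ) * (ℓmin * T) ≤ (γbar:ℝ) * (ℓmin * ((γhat:ℝ) * (p₁:ℝ))) :=
    mul_le_mul_of_nonneg_left (mul_le_mul_of_nonneg_left hT2 hℓmin.le) hγb
  have h3 : ℓmin * T * ρ = ℓmax * T := by rw [← hml]; ring
  linarith [h1, h2, h3]
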